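/- Let f ∈ H²([-1,1]) with f(±1) = 0 and f'(±1) = 0. Then for every x ∈ [-1,1], ∫_{-1}^{1} G_{ττ}(x,τ) f''(τ) dτ = f(x), where G is the clamped Green function of d⁴/dx⁴ on (-1,1). -/

import Mathlib

/-- The clamped Green function of `d⁴/dx⁴` on `(-1,1)`. -/
noncomputable def GreenG (x τ : ℝ) : ℝ :=
  if τ ≤ x then (1 / 24) * (x - 1) ^ 2 * (τ + 1) ^ 2 * (1 + 2 * x - 2 * τ - x * τ)
  else (1 / 24) * (τ - 1) ^ 2 * (x + 1) ^ 2 * (1 + 2 * τ - 2 * x - x * τ)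

open MeasureTheory


lemma cubic_hasDerivAt (a b c d t : ℝ) :
    HasDerivAt (fun s : ℝ => a + b*s + c*s^2 + d*s^3) (b + 2*c*t + 3*d*t^2) t := by
  have h := (((hasDerivAt_const t a).add ((hasDerivAt_id t).const_mul b)).add
      ((hasDerivAt_pow 2 t).const_mul c)).add ((hasDerivAt_pow 3 t).const_mul d)
  exact h.congr_deriv (by push_cast; ring)

lemma quad_hasDerivAt (a b c t : ℝ) :
    HasDerivAt (fun s : ℝ => a + b*s + c*s^2) (b + 2*c*t) t := by
  have h := ((hasDerivAt_const t a).add ((hasDerivAt_id t).const_mul b)).add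
      ((hasDerivAt_pow 2 t).const_mul c)
  exact h.congr_deriv (by push_cast; ring)

lemma cubic_deriv2 (a b c d t : ℝ) :
    deriv (deriv (fun s : ℝ => a + b*s + c*s^2 + d*s^3)) t = 2*c + 6*d*t := by
  have h1 : deriv (fun s : ℝ => a + b*s + c*s^2 + d*s^3)
      = fun s => b + (2*c)*s + (3*d)*s^2 := by
    funext s
    simpa using (cubic_hasDerivAt a b c d s).deriv
  rw [h1]
  have := (quad_hasDerivAt b (2*c) (3*d) t).deriv
  rw [this]; ring

lemma greenG_deriv2_left (x τ : ℝ) (h : τ < x) :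
    deriv (deriv (fun t => GreenG x t)) τ
      = -(1/4)*(x-1)^2 + (-(1/4)*(x-1)^2*(2+x))*τ := by
  have hev : (fun t => GreenG x t) =ᶠ[nhds τ]
      (fun t => (1/24)*(x-1)^2*(1+2*x) + (3*x*((1/24)*(x-1)^2))*t
        + (-3*((1/24)*(x-1)^2))*t^2 + (-(2+x)*((1/24)*(x-1)^2))*t^3) := by
    filter_upwards [Iio_mem_nhds h] with t ht
    simp only [GreenG, if_pos (le_of_lt (Set.mem_Iio.mp ht))]
    ring
  rw [hev.deriv.deriv.eq_of_nhds, cubic_deriv2]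
  ring

lemma greenG_deriv2_right (x τ : ℝ) (h : x < τ) :
    deriv (deriv (fun t => GreenG x t)) τ
      = -(1/4)*(x+1)^2 + ((1/4)*(x+1)^2*(2-x))*τ := by
  have hev : (fun t => GreenG x t) =ᶠ[nhds τ]
      (fun t => (1/24)*(x+1)^2*(1-2*x) + (3*x*((1/24)*(x+1)^2))*t
        + (-3*((1/24)*(x+1)^2))*t^2 + ((2-x)*((1/24)*(x+1)^2))*t^3) := by
    filter_upwards [Ioi_mem_nhds h] with t ht
    simp only [GreenG, if_neg (not_le.mpr (Set.mem_Ioi.mp ht))]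
    ring
  rw [hev.deriv.deriv.eq_of_nhds, cubic_deriv2]
  ring


/-- reproducing property `∫_{-1}^1 G_{ττ}(x,τ) f''(τ) dτ = f(x)` for
`f ∈ H²([-1,1])` with clamped boundary conditions `f(±1) = 0`, `f'(±1) = 0`. -/
theorem stmt11 (f : ℝ → ℝ)
    (hf1 : ∀ x ∈ Set.Icc (-1 : ℝ) 1, HasDerivAt f (deriv f x) x)
    (hf2 : ∀ x ∈ Set.Icc (-1 : ℝ) 1, HasDerivAt (deriv f) (deriv (deriv f) x) x)
    (hf2L2 : IntervalIntegrable (fun x => (deriv (deriv f) x) ^ 2) volume (-1) 1)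
    (hb0 : f (-1) = 0) (hb1 : f 1 = 0)
    (hb0' : deriv f (-1) = 0) (hb1' : deriv f 1 = 0) :
    ∀ x ∈ Set.Icc (-1 : ℝ) 1,
      (∫ τ in (-1 : ℝ)..1, deriv (deriv (fun t => GreenG x t)) τ * deriv (deriv f) τ)
        = f x := by
  have hg : Measurable (deriv (deriv f)) := measurable_deriv _
  have hf2int : IntervalIntegrable (deriv (deriv f)) volume (-1) 1 := by
    have hmaj : IntervalIntegrable (fun τ => (1 + (deriv (deriv f) τ)^2)/2) volume (-1) 1 :=
      ((intervalIntegrable_const (c := (1:ℝ))).add hf2L2).div_const 2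
    apply hmaj.mono_fun hg.aestronglyMeasurable.restrict
    refine Filter.Eventually.of_forall fun τ => ?_
    simp only [Real.norm_eq_abs]
    rw [abs_of_nonneg (by positivity : (0:ℝ) ≤ (1 + (deriv (deriv f) τ)^2)/2)]
    nlinarith [sq_abs (deriv (deriv f) τ), sq_nonneg (|deriv (deriv f) τ| - 1)]
  have hfc : ContinuousOn (deriv f) (Set.Icc (-1:ℝ) 1) :=
    fun t ht => ((hf2 t ht).differentiableAt.continuousAt).continuousWithinAt
  have key : ∀ p q a b : ℝ, -1 ≤ a → a ≤ b → b ≤ 1 →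
      ∫ τ in a..b, (p + q*τ) * deriv (deriv f) τ
        = (p + q*b) * deriv f b - (p + q*a) * deriv f a - q * (f b - f a) := by
    intro p q a b ha hab hb
    have hsub : Set.uIcc a b ⊆ Set.Icc (-1:ℝ) 1 := by
      rw [Set.uIcc_of_le hab]; exact Set.Icc_subset_Icc ha hb
    have hsub2 : Set.uIcc a b ⊆ Set.uIcc (-1:ℝ) 1 := by
      rwa [Set.uIcc_of_le (by norm_num : (-1:ℝ) ≤ 1)]
    have hu : ∀ t ∈ Set.uIcc a b, HasDerivAt (fun τ => p + q*τ) q t := by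
      intro t _
      simpa using ((hasDerivAt_id t).const_mul q).const_add p
    have hv : ∀ t ∈ Set.uIcc a b, HasDerivAt (deriv f) (deriv (deriv f) t) t :=
      fun t ht => hf2 t (hsub ht)
    have hv' : IntervalIntegrable (deriv (deriv f)) volume a b := hf2int.mono_set hsub2
    have hibp := intervalIntegral.integral_mul_deriv_eq_deriv_mul hu hv
      (intervalIntegrable_const) hv'
    have h2 : ∫ τ in a..b, q * deriv f τ = q * (f b - f a) := by
      rw [intervalIntegral.integral_const_mul]
      congr 1
      exact intervalIntegral.integral_eq_sub_of_hasDerivAt (fun t ht => hf1 t (hsub ht))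
        ((hfc.mono hsub).intervalIntegrable)
    rw [hibp, h2]
  intro x hx
  obtain ⟨hx1, hx2⟩ := hx
  have hne : ∀ᵐ τ : ℝ ∂volume, τ ≠ x := by
    have h : {a : ℝ | ¬ a ≠ x} = {x} := by ext; simp
    rw [ae_iff, h]; exact measure_singleton x
  set p₁ : ℝ := -(1/4)*(x-1)^2 with hp₁
  set q₁ : ℝ := -(1/4)*(x-1)^2*(2+x) with hq₁
  set p₂ : ℝ := -(1/4)*(x+1)^2 with hp₂
  set q₂ : ℝ := (1/4)*(x+1)^2*(2-x) with hq₂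
  have haeL' : ∀ᵐ τ : ℝ ∂volume, τ ∈ Set.uIoc (-1:ℝ) x →
      deriv (deriv (fun t => GreenG x t)) τ * deriv (deriv f) τ
        = (p₁ + q₁*τ) * deriv (deriv f) τ := by
    filter_upwards [hne] with τ hτ hmem
    rw [Set.uIoc_of_le hx1] at hmem
    rw [greenG_deriv2_left x τ (lt_of_le_of_ne hmem.2 hτ)]
  have haeR' : ∀ᵐ τ : ℝ ∂volume, τ ∈ Set.uIoc x (1:ℝ) →
      deriv (deriv (fun t => GreenG x t)) τ * deriv (deriv f) τ
        = (p₂ + q₂*τ) * deriv (deriv f) τ := by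
    refine Filter.Eventually.of_forall fun τ hmem => ?_
    rw [Set.uIoc_of_le hx2] at hmem
    rw [greenG_deriv2_right x τ hmem.1]
  have haeL := (MeasureTheory.ae_restrict_iff' measurableSet_uIoc).mpr haeL'
  have haeR := (MeasureTheory.ae_restrict_iff' measurableSet_uIoc).mpr haeR'
  have hPL : IntervalIntegrable (fun τ => (p₁ + q₁*τ) * deriv (deriv f) τ) volume (-1) x := by
    refine IntervalIntegrable.continuousOn_mul ?_ (Continuous.continuousOn (by continuity))
    refine hf2int.mono_set ?_
    rw [Set.uIcc_of_le (by norm_num : (-1:ℝ) ≤ 1), Set.uIcc_of_le hx1]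
    exact Set.Icc_subset_Icc le_rfl hx2
  have hPR : IntervalIntegrable (fun τ => (p₂ + q₂*τ) * deriv (deriv f) τ) volume x 1 := by
    refine IntervalIntegrable.continuousOn_mul ?_ (Continuous.continuousOn (by continuity))
    refine hf2int.mono_set ?_
    rw [Set.uIcc_of_le (by norm_num : (-1:ℝ) ≤ 1), Set.uIcc_of_le hx2]
    exact Set.Icc_subset_Icc hx1 le_rfl
  have hiL : IntervalIntegrable
      (fun τ => deriv (deriv (fun t => GreenG x t)) τ * deriv (deriv f) τ) volume (-1) x :=
    hPL.congr_ae (Filter.EventuallyEq.symm haeL)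
  have hiR : IntervalIntegrable
      (fun τ => deriv (deriv (fun t => GreenG x t)) τ * deriv (deriv f) τ) volume x 1 :=
    hPR.congr_ae (Filter.EventuallyEq.symm haeR)
  rw [← intervalIntegral.integral_add_adjacent_intervals hiL hiR,
    intervalIntegral.integral_congr_ae haeL', intervalIntegral.integral_congr_ae haeR',
    key p₁ q₁ (-1) x le_rfl hx1 hx2, key p₂ q₂ x 1 hx1 hx2 le_rfl,
    hb0, hb1, hb0', hb1', hp₁, hq₁, hp₂, hq₂]
  ring
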